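/- In G(de,e,2) with d ≥ 3, e ≥ 2, the subgroup H generated by s = (-1,1 | (1 2)) and t = (e,0 | id) has order 2d^2 and index e in G(de,e,2), and the right cosets of H are exactly H(sr)^k for 0 ≤ k < e, where r = (0,0 | (1 2)); that is, (sr)^i and (sr)^j lie in the same right coset of H with 0 ≤ i, j < e only if i = j. -/

import Mathlib

/-- The wreath product `ZMod m ≀ Sₙ`: elements `(a | σ)` with `a : Fin n → ZMod m`
and `σ` a permutation of `{1,…,n}` (i.e. of `Fin n`). -/
structure W (m n : ℕ) : Type where
  a : Fin n → ZMod m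
  p : Equiv.Perm (Fin n)

namespace W

lemma ext' {m n : ℕ} {x y : W m n} (h1 : x.a = y.a) (h2 : x.p = y.p) : x = y := by
  cases x; cases y; cases h1; cases h2; rfl

instance (m n : ℕ) : Mul (W m n) :=
  ⟨fun x y => ⟨fun i => x.a i + y.a (x.p i), y.p * x.p⟩⟩

instance (m n : ℕ) : One (W m n) := ⟨⟨0, 1⟩⟩

instance (m n : ℕ) : Inv (W m n) :=
  ⟨fun x => ⟨fun i => -(x.a (x.p.symm i)), x.p⁻¹⟩⟩

lemma mul_def {m n : ℕ} (x y : W m n) :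
    x * y = ⟨fun i => x.a i + y.a (x.p i), y.p * x.p⟩ := rfl

lemma one_def {m n : ℕ} : (1 : W m n) = ⟨0, 1⟩ := rfl

lemma inv_def {m n : ℕ} (x : W m n) :
    x⁻¹ = ⟨fun i => -(x.a (x.p.symm i)), x.p⁻¹⟩ := rfl

/-- The wreath product group structure, with multiplication
`(a | σ)(b | τ) = (aᵢ + b_{σ(i)} | στ)` (where `στ` means: apply `σ` first). -/
instance (m n : ℕ) : Group (W m n) where
  mul_assoc x y z := by
    refine ext' (funext fun i => ?_) ?_
    · show (x.a i + y.a (x.p i)) + z.a ((y.p * x.p) i)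
        = x.a i + (y.a (x.p i) + z.a (y.p (x.p i)))
      simp [Equiv.Perm.mul_apply, add_assoc]
    · show (z.p * (y.p * x.p)) = (z.p * y.p) * x.p
      exact (mul_assoc _ _ _).symm
  one_mul x := by
    refine ext' (funext fun i => ?_) ?_
    · show 0 + x.a ((1 : Equiv.Perm (Fin _)) i) = x.a i; simp
    · show x.p * 1 = x.p; simp
  mul_one x := by
    refine ext' (funext fun i => ?_) ?_
    · show x.a i + 0 = x.a i; simp
    · show 1 * x.p = x.p; simp
  inv_mul_cancel x := by
    refine ext' (funext fun i => ?_) ?_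
    · simp [mul_def, inv_def, one_def, Equiv.Perm.inv_def]
    · show x.p * x.p⁻¹ = 1; exact mul_inv_cancel x.p

end W

/-- The subgroup of `ZMod m ≀ Sₙ` of elements whose diagonal entries sum to `0 mod e`.
For `m = d*e` this is the imprimitive complex reflection group `G(de,e,n)`. -/
def Gsub (m e n : ℕ) (h : e ∣ m) : Subgroup (W m n) where
  carrier := {x | ZMod.castHom h (ZMod e) (∑ i, x.a i) = 0}
  one_mem' := by simp [W.one_def]
  mul_mem' := by
    intro x y hx hy
    show ZMod.castHom h (ZMod e) (∑ i, (x.a i + y.a (x.p i))) = 0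
    rw [Finset.sum_add_distrib, Equiv.sum_comp x.p y.a, map_add]
    rw [Set.mem_setOf_eq] at hx hy
    rw [hx, hy, add_zero]
  inv_mem' := by
    intro x hx
    show ZMod.castHom h (ZMod e) (∑ i, -(x.a (x.p.symm i))) = 0
    rw [Finset.sum_neg_distrib, Equiv.sum_comp x.p.symm x.a, map_neg]
    rw [Set.mem_setOf_eq] at hx
    rw [hx, neg_zero]

lemma mem_Gsub {m e n : ℕ} (h : e ∣ m) (x : W m n) :
    x ∈ Gsub m e n h ↔ ZMod.castHom h (ZMod e) (∑ i, x.a i) = 0 := Iff.rfl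

/-- The imprimitive complex reflection group `G(de,e,n)`. -/
abbrev Gde (d e n : ℕ) : Subgroup (W (d * e) n) := Gsub (d * e) e n (dvd_mul_left e d)

/-- A Hamiltonian cycle in the (undirected, right) Cayley graph `Γ(G,S)`,
encoded as the list of edge labels (from `S ∪ S⁻¹`) along the cycle starting at `1`:
the partial products visit every element of `G` exactly once and the
total product returns to `1`. -/
def IsHamCycle {G : Type*} [Group G] (S : Set G) (l : List G) : Prop :=
  (∀ x ∈ l, x ∈ S ∨ x⁻¹ ∈ S) ∧ l.prod = 1 ∧ l.length = Nat.card G ∧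
    ((List.range l.length).map fun k => (l.take k).prod).Nodup



section Aux

lemma perm2 (σ : Equiv.Perm (Fin 2)) : σ = 1 ∨ σ = Equiv.swap 0 1 := by revert σ; decide

lemma swap_ne_one : Equiv.swap (0 : Fin 2) 1 ≠ 1 := by decide

lemma W.diag_mul {m : ℕ} (a0 a1 b0 b1 : ZMod m) :
    (⟨![a0, a1], 1⟩ : W m 2) * ⟨![b0, b1], 1⟩ = ⟨![a0 + b0, a1 + b1], 1⟩ := by
  rw [W.mul_def]
  refine W.ext' (funext fun i => ?_) (by simp)
  fin_cases i <;> simp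

lemma W.diag_pow {m : ℕ} (c0 c1 : ZMod m) (k : ℕ) :
    (⟨![c0, c1], 1⟩ : W m 2) ^ k = ⟨![(k : ZMod m) * c0, (k : ZMod m) * c1], 1⟩ := by
  induction k with
  | zero =>
    rw [pow_zero, W.one_def]
    refine W.ext' (funext fun i => ?_) rfl
    fin_cases i <;> simp
  | succ k ih =>
    rw [pow_succ, ih, W.diag_mul]
    refine W.ext' (funext fun i => ?_) rfl
    fin_cases i <;> · simp; ring

lemma cast_eq_zero_iff (d e : ℕ) [NeZero e] [NeZero (d * e)] (z : ZMod (d * e)) :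
    ZMod.castHom (dvd_mul_left e d) (ZMod e) z = 0 ↔
      ∃ k, k < d ∧ z = ((k * e : ℕ) : ZMod (d * e)) := by
  constructor
  · intro h
    rw [ZMod.castHom_apply, ← ZMod.natCast_val, ZMod.natCast_eq_zero_iff] at h
    obtain ⟨k, hk⟩ := h
    have h1 : z.val < d * e := z.val_lt
    have h2 : 0 < e := NeZero.pos e
    have hkd : k < d := by
      by_contra hcon
      push_neg at hcon
      have : d * e ≤ e * k := by
        calc d * e = e * d := Nat.mul_comm d e
        _ ≤ e * k := Nat.mul_le_mul_left e hcon
      omega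
    refine ⟨k, hkd, ?_⟩
    conv_lhs => rw [← ZMod.natCast_rightInverse z]
    rw [hk]
    exact congrArg _ (Nat.mul_comm e k)
  · rintro ⟨k, -, rfl⟩
    rw [map_natCast]
    push_cast [ZMod.natCast_self]
    ring

lemma mul_e_inj {d e : ℕ} (he : 0 < e) {k l : ℕ} (hk : k < d) (hl : l < d)
    (h : ((k * e : ℕ) : ZMod (d * e)) = ((l * e : ℕ) : ZMod (d * e))) : k = l := by
  haveI : NeZero (d * e) := ⟨Nat.mul_ne_zero (by omega) (by omega)⟩
  have h' := congrArg ZMod.val h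
  rw [ZMod.val_cast_of_lt (Nat.mul_lt_mul_of_lt_of_le hk le_rfl he),
      ZMod.val_cast_of_lt (Nat.mul_lt_mul_of_lt_of_le hl le_rfl he)] at h'
  exact Nat.eq_of_mul_eq_mul_right he h'

lemma G_cast_a0 {d e : ℕ} (x : Gde d e 2) :
    ZMod.castHom (dvd_mul_left e d) (ZMod e) ((x : W (d * e) 2).a 0)
      = - ZMod.castHom (dvd_mul_left e d) (ZMod e) ((x : W (d * e) 2).a 1) := by
  have h := x.2
  rw [mem_Gsub, Fin.sum_univ_two, map_add] at h
  exact eq_neg_of_add_eq_zero_left h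

/-- The subgroup `H = ⟨s,t⟩` of `G(de,e,2)`, described explicitly. -/
def Ksub (d e : ℕ) : Subgroup (Gde d e 2) where
  carrier := {x | ZMod.castHom (dvd_mul_left e d) (ZMod e) ((x : W (d * e) 2).a 1)
      = if (x : W (d * e) 2).p = 1 then 0 else 1}
  one_mem' := by
    show ZMod.castHom (dvd_mul_left e d) (ZMod e) ((1 : W (d * e) 2).a 1)
      = if (1 : W (d * e) 2).p = 1 then 0 else 1
    simp [W.one_def]
  mul_mem' := by
    intro x y hx hy
    simp only [Set.mem_setOf_eq] at hx hy ⊢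
    have hy0 := G_cast_a0 y
    have hco : ((x * y : Gde d e 2) : W (d * e) 2)
        = (x : W (d * e) 2) * (y : W (d * e) 2) := rfl
    rw [hco, W.mul_def]
    rcases perm2 (x : W (d * e) 2).p with h1 | h1 <;>
      rcases perm2 (y : W (d * e) 2).p with h2 | h2
    · rw [h1, if_pos rfl] at hx; rw [h2, if_pos rfl] at hy
      simp [h1, h2, map_add, hx, hy]
    · rw [h1, if_pos rfl] at hx; rw [h2, if_neg swap_ne_one] at hy
      simp [h1, h2, map_add, hx, hy, swap_ne_one]
    · rw [h1, if_neg swap_ne_one] at hx; rw [h2, if_pos rfl] at hy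
      rw [hy] at hy0
      simp [h1, h2, map_add, hx, hy0, swap_ne_one, Equiv.swap_apply_right]
    · rw [h1, if_neg swap_ne_one] at hx; rw [h2, if_neg swap_ne_one] at hy
      rw [hy] at hy0
      simp [h1, h2, map_add, hx, hy0, Equiv.swap_apply_right, Equiv.swap_mul_self]
  inv_mem' := by
    intro x hx
    simp only [Set.mem_setOf_eq] at hx ⊢
    have hco : ((x⁻¹ : Gde d e 2) : W (d * e) 2) = (x : W (d * e) 2)⁻¹ := rfl
    rw [hco, W.inv_def]
    rcases perm2 (x : W (d * e) 2).p with h1 | h1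
    · rw [h1, if_pos rfl] at hx
      simp [-ZMod.castHom_apply, h1, map_neg, hx, Equiv.Perm.one_symm]
    · rw [h1, if_neg swap_ne_one] at hx
      have hx0 := G_cast_a0 x
      rw [hx] at hx0
      simp [-ZMod.castHom_apply, h1, swap_ne_one, hx0, Equiv.symm_swap,
        Equiv.swap_apply_right, Equiv.swap_inv, map_neg]

lemma mem_Ksub {d e : ℕ} (x : Gde d e 2) :
    x ∈ Ksub d e ↔ ZMod.castHom (dvd_mul_left e d) (ZMod e) ((x : W (d * e) 2).a 1)
      = if (x : W (d * e) 2).p = 1 then 0 else 1 := Iff.rfl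

end Aux


section Count

/-- Generic element of `H`. -/
def Felt (d e : ℕ) (a b : ZMod d) (c : Bool) : W (d * e) 2 :=
  ⟨![((a.val * e : ℕ) : ZMod (d * e)) - (if c then 1 else 0),
     ((b.val * e : ℕ) : ZMod (d * e)) + (if c then 1 else 0)],
   if c then Equiv.swap 0 1 else 1⟩

lemma Felt_memG (d e : ℕ) (a b : ZMod d) (c : Bool) : Felt d e a b c ∈ Gde d e 2 := by
  rw [mem_Gsub, Fin.sum_univ_two]
  have h : (Felt d e a b c).a 0 + (Felt d e a b c).a 1
      = ((a.val * e : ℕ) : ZMod (d * e)) + ((b.val * e : ℕ) : ZMod (d * e)) := by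
    simp only [Felt, Matrix.cons_val_zero, Matrix.cons_val_one, Matrix.head_cons]
    ring
  rw [h, map_add, map_natCast, map_natCast]
  push_cast [ZMod.natCast_self]
  ring

lemma Felt_memK (d e : ℕ) (a b : ZMod d) (c : Bool) :
    (⟨Felt d e a b c, Felt_memG d e a b c⟩ : Gde d e 2) ∈ Ksub d e := by
  rw [mem_Ksub]
  show ZMod.castHom (dvd_mul_left e d) (ZMod e) ((Felt d e a b c).a 1)
    = if (Felt d e a b c).p = 1 then 0 else 1
  cases c
  · have h1 : (Felt d e a b false).a 1 = ((b.val * e : ℕ) : ZMod (d * e)) := by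
      simp [Felt]
    rw [h1, map_natCast, if_pos (show (Felt d e a b false).p = 1 from rfl)]
    push_cast [ZMod.natCast_self]
    ring
  · have h1 : (Felt d e a b true).a 1 = ((b.val * e : ℕ) : ZMod (d * e)) + 1 := by
      simp [Felt]
    rw [h1, map_add, map_natCast, map_one, if_neg (show ¬(Felt d e a b true).p = 1 from swap_ne_one)]
    push_cast [ZMod.natCast_self]
    ring

/-- Generic element of `G(de,e,2)`. -/
def Gelt (d e : ℕ) (a : ZMod (d * e)) (b : ZMod d) (c : Bool) : W (d * e) 2 :=
  ⟨![a, ((b.val * e : ℕ) : ZMod (d * e)) - a], if c then Equiv.swap 0 1 else 1⟩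

lemma Gelt_memG (d e : ℕ) (a : ZMod (d * e)) (b : ZMod d) (c : Bool) :
    Gelt d e a b c ∈ Gde d e 2 := by
  rw [mem_Gsub, Fin.sum_univ_two]
  have h : (Gelt d e a b c).a 0 + (Gelt d e a b c).a 1 = ((b.val * e : ℕ) : ZMod (d * e)) := by
    simp only [Gelt, Matrix.cons_val_zero, Matrix.cons_val_one, Matrix.head_cons]
    ring
  rw [h, map_natCast]
  push_cast [ZMod.natCast_self]
  ring

lemma card_Ksub (d e : ℕ) (hd : 3 ≤ d) (he : 2 ≤ e) :
    Nat.card (Ksub d e) = 2 * d ^ 2 := by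
  haveI : NeZero e := ⟨by omega⟩
  haveI : NeZero d := ⟨by omega⟩
  haveI : NeZero (d * e) := ⟨Nat.mul_ne_zero (by omega) (by omega)⟩
  have he0 : 0 < e := by omega
  set F : ZMod d × ZMod d × Bool → ↥(Ksub d e) :=
    fun x => ⟨⟨Felt d e x.1 x.2.1 x.2.2, Felt_memG d e x.1 x.2.1 x.2.2⟩,
      Felt_memK d e x.1 x.2.1 x.2.2⟩ with hF
  have hinj : Function.Injective F := by
    rintro ⟨a, b, c⟩ ⟨a', b', c'⟩ h
    have h1 : Felt d e a b c = Felt d e a' b' c' :=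
      Subtype.ext_iff.mp (Subtype.ext_iff.mp h)
    have hp := congrArg W.p h1
    have hc : c = c' := by
      cases c <;> cases c' <;> first | rfl | exact absurd hp.symm swap_ne_one | exact absurd hp swap_ne_one
    subst hc
    have ha0 := congrArg (fun z => W.a z 0) h1
    have ha1 := congrArg (fun z => W.a z 1) h1
    simp only [Felt, Matrix.cons_val_zero, Matrix.cons_val_one, Matrix.head_cons] at ha0 ha1
    have ha : a = a' := by
      have h2 : ((a.val * e : ℕ) : ZMod (d * e)) = ((a'.val * e : ℕ) : ZMod (d * e)) := by
        have := sub_left_inj.mp ha0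
        exact this
      have := mul_e_inj he0 a.val_lt a'.val_lt h2
      exact ZMod.val_injective d this
    have hb : b = b' := by
      have h2 : ((b.val * e : ℕ) : ZMod (d * e)) = ((b'.val * e : ℕ) : ZMod (d * e)) :=
        add_right_cancel ha1
      have := mul_e_inj he0 b.val_lt b'.val_lt h2
      exact ZMod.val_injective d this
    rw [ha, hb]
  have hsurj : Function.Surjective F := by
    rintro ⟨⟨X, hXG⟩, hXK⟩
    rw [mem_Ksub] at hXK
    have hX0 := G_cast_a0 (⟨X, hXG⟩ : Gde d e 2)
    rcases perm2 X.p with hp | hp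
    · rw [show ((⟨X, hXG⟩ : Gde d e 2) : W (d * e) 2) = X from rfl, hp, if_pos rfl] at hXK
      rw [show ((⟨X, hXG⟩ : Gde d e 2) : W (d * e) 2) = X from rfl, hXK, neg_zero] at hX0
      obtain ⟨k, hk, hk2⟩ := (cast_eq_zero_iff d e _).mp hX0
      obtain ⟨l, hl, hl2⟩ := (cast_eq_zero_iff d e _).mp hXK
      refine ⟨⟨(k : ZMod d), (l : ZMod d), false⟩, ?_⟩
      apply Subtype.ext
      apply Subtype.ext
      show Felt d e _ _ false = X
      refine W.ext' (funext fun i => ?_) ?_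
      · fin_cases i <;>
          simp [Felt, ZMod.val_cast_of_lt hk, ZMod.val_cast_of_lt hl, ← hk2, ← hl2]
      · show (1 : Equiv.Perm (Fin 2)) = X.p
        exact hp.symm
    · rw [show ((⟨X, hXG⟩ : Gde d e 2) : W (d * e) 2) = X from rfl, hp,
        if_neg swap_ne_one] at hXK
      rw [show ((⟨X, hXG⟩ : Gde d e 2) : W (d * e) 2) = X from rfl, hXK] at hX0
      have h1' : ZMod.castHom (dvd_mul_left e d) (ZMod e) (X.a 1 - 1) = 0 := by
        rw [map_sub, hXK, map_one, sub_self]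
      have h0' : ZMod.castHom (dvd_mul_left e d) (ZMod e) (X.a 0 + 1) = 0 := by
        rw [map_add, hX0, map_one, neg_add_cancel]
      obtain ⟨k, hk, hk2⟩ := (cast_eq_zero_iff d e _).mp h0'
      obtain ⟨l, hl, hl2⟩ := (cast_eq_zero_iff d e _).mp h1'
      refine ⟨⟨(k : ZMod d), (l : ZMod d), true⟩, ?_⟩
      apply Subtype.ext
      apply Subtype.ext
      show Felt d e _ _ true = X
      refine W.ext' (funext fun i => ?_) ?_
      · fin_cases i
        · show ((((k : ZMod d).val * e : ℕ) : ZMod (d * e)) - if true then 1 else 0) = X.a 0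
          rw [ZMod.val_cast_of_lt hk, ← hk2]
          simp
        · show ((((l : ZMod d).val * e : ℕ) : ZMod (d * e)) + if true then 1 else 0) = X.a 1
          rw [ZMod.val_cast_of_lt hl, ← hl2]
          simp
      · show Equiv.swap 0 1 = X.p
        exact hp.symm
  rw [← Nat.card_congr (Equiv.ofBijective F ⟨hinj, hsurj⟩)]
  simp only [Nat.card_prod, Nat.card_zmod]
  rw [Nat.card_eq_fintype_card, Fintype.card_bool]
  ring

lemma card_Gde (d e : ℕ) (hd : 3 ≤ d) (he : 2 ≤ e) :
    Nat.card (Gde d e 2) = 2 * d ^ 2 * e := by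
  haveI : NeZero e := ⟨by omega⟩
  haveI : NeZero d := ⟨by omega⟩
  haveI : NeZero (d * e) := ⟨Nat.mul_ne_zero (by omega) (by omega)⟩
  have he0 : 0 < e := by omega
  set F : ZMod (d * e) × ZMod d × Bool → ↥(Gde d e 2) :=
    fun x => ⟨Gelt d e x.1 x.2.1 x.2.2, Gelt_memG d e x.1 x.2.1 x.2.2⟩ with hF
  have hinj : Function.Injective F := by
    rintro ⟨a, b, c⟩ ⟨a', b', c'⟩ h
    have h1 : Gelt d e a b c = Gelt d e a' b' c' := Subtype.ext_iff.mp h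
    have hp := congrArg W.p h1
    have hc : c = c' := by
      cases c <;> cases c' <;> first | rfl | exact absurd hp.symm swap_ne_one | exact absurd hp swap_ne_one
    subst hc
    have ha0 := congrArg (fun z => W.a z 0) h1
    have ha1 := congrArg (fun z => W.a z 1) h1
    simp only [Gelt, Matrix.cons_val_zero, Matrix.cons_val_one, Matrix.head_cons] at ha0 ha1
    have hb : b = b' := by
      rw [ha0] at ha1
      have h2 : ((b.val * e : ℕ) : ZMod (d * e)) = ((b'.val * e : ℕ) : ZMod (d * e)) :=
        sub_left_inj.mp ha1
      have := mul_e_inj he0 b.val_lt b'.val_lt h2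
      exact ZMod.val_injective d this
    rw [ha0, hb]
  have hsurj : Function.Surjective F := by
    rintro ⟨X, hXG⟩
    have hsum : ZMod.castHom (dvd_mul_left e d) (ZMod e) (X.a 0 + X.a 1) = 0 := by
      have h := hXG
      rw [mem_Gsub, Fin.sum_univ_two] at h
      exact h
    obtain ⟨k, hk, hk2⟩ := (cast_eq_zero_iff d e _).mp hsum
    rcases perm2 X.p with hp | hp
    · refine ⟨⟨X.a 0, (k : ZMod d), false⟩, ?_⟩
      apply Subtype.ext
      show Gelt d e _ _ false = X
      refine W.ext' (funext fun i => ?_) ?_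
      · fin_cases i
        · rfl
        · show ((((k : ZMod d).val * e : ℕ) : ZMod (d * e)) - X.a 0) = X.a 1
          rw [ZMod.val_cast_of_lt hk, ← hk2]
          ring
      · exact hp.symm
    · refine ⟨⟨X.a 0, (k : ZMod d), true⟩, ?_⟩
      apply Subtype.ext
      show Gelt d e _ _ true = X
      refine W.ext' (funext fun i => ?_) ?_
      · fin_cases i
        · rfl
        · show ((((k : ZMod d).val * e : ℕ) : ZMod (d * e)) - X.a 0) = X.a 1
          rw [ZMod.val_cast_of_lt hk, ← hk2]
          ring
      · exact hp.symm
  rw [← Nat.card_congr (Equiv.ofBijective F ⟨hinj, hsurj⟩)]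
  simp only [Nat.card_prod, Nat.card_zmod]
  rw [Nat.card_eq_fintype_card, Fintype.card_bool]
  ring

end Count


lemma closure_eq_Ksub (d e : ℕ) (hd : 3 ≤ d) (he : 2 ≤ e) (s t : Gde d e 2)
    (hs : (s : W (d * e) 2) = ⟨![-1, 1], Equiv.swap 0 1⟩)
    (ht : (t : W (d * e) 2) = ⟨![(e : ZMod (d * e)), 0], 1⟩) :
    Subgroup.closure {s, t} = Ksub d e := by
  haveI : NeZero e := ⟨by omega⟩
  haveI : NeZero (d * e) := ⟨Nat.mul_ne_zero (by omega) (by omega)⟩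
  have hsmem : s ∈ Subgroup.closure {s, t} := Subgroup.subset_closure (Set.mem_insert _ _)
  have htmem : t ∈ Subgroup.closure {s, t} :=
    Subgroup.subset_closure (Set.mem_insert_of_mem _ rfl)
  have hu : ((s * t * s : Gde d e 2) : W (d * e) 2) = ⟨![0, (e : ZMod (d * e))], 1⟩ := by
    have hco : ((s * t * s : Gde d e 2) : W (d * e) 2)
        = (s : W (d * e) 2) * (t : W (d * e) 2) * (s : W (d * e) 2) := rfl
    rw [hco, hs, ht, W.mul_def, W.mul_def]
    refine W.ext' (funext fun i => ?_) ?_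
    · fin_cases i <;>
        · simp [Equiv.swap_apply_left, Equiv.swap_apply_right]
          try ring
    · show Equiv.swap 0 1 * ((1 : Equiv.Perm (Fin 2)) * Equiv.swap 0 1) = 1
      simp [Equiv.swap_mul_self]
  have key : ∀ (x : Gde d e 2) (k l : ℕ),
      (x : W (d * e) 2).a 0 = ((k * e : ℕ) : ZMod (d * e)) →
      (x : W (d * e) 2).a 1 = ((l * e : ℕ) : ZMod (d * e)) →
      (x : W (d * e) 2).p = 1 → x ∈ Subgroup.closure {s, t} := by
    intro x k l h0 h1 hp
    have hx : x = t ^ k * (s * t * s) ^ l := by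
      apply Subtype.ext
      have hco : ((t ^ k * (s * t * s) ^ l : Gde d e 2) : W (d * e) 2)
          = ((t : W (d * e) 2)) ^ k * (((s * t * s : Gde d e 2) : W (d * e) 2)) ^ l := by
        simp
      rw [hco, ht, hu, W.diag_pow, W.diag_pow, W.diag_mul]
      refine W.ext' (funext fun i => ?_) hp
      fin_cases i <;>
        · simp [h0, h1]
          try push_cast
          try ring
    rw [hx]
    exact mul_mem (pow_mem htmem k) (pow_mem (mul_mem (mul_mem hsmem htmem) hsmem) l)
  apply le_antisymm
  · rw [Subgroup.closure_le]
    intro x hx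
    simp only [Set.mem_insert_iff, Set.mem_singleton_iff] at hx
    rcases hx with rfl | rfl
    · rw [SetLike.mem_coe, mem_Ksub, hs]
      simp [-ZMod.castHom_apply, swap_ne_one, map_one]
    · rw [SetLike.mem_coe, mem_Ksub, ht]
      simp
  · intro x hx
    rw [mem_Ksub] at hx
    have hx0 := G_cast_a0 x
    rcases perm2 (x : W (d * e) 2).p with hp | hp
    · rw [hp, if_pos rfl] at hx
      rw [hx, neg_zero] at hx0
      obtain ⟨k, hk, hk2⟩ := (cast_eq_zero_iff d e _).mp hx0
      obtain ⟨l, hl, hl2⟩ := (cast_eq_zero_iff d e _).mp hx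
      exact key x k l hk2 hl2 hp
    · rw [hp, if_neg swap_ne_one] at hx
      rw [hx] at hx0
      have hco : ((x * s : Gde d e 2) : W (d * e) 2)
          = (x : W (d * e) 2) * (s : W (d * e) 2) := rfl
      have h0 : ((x * s : Gde d e 2) : W (d * e) 2).a 0 = (x : W (d * e) 2).a 0 + 1 := by
        rw [hco, W.mul_def, hp]
        simp [hs, Equiv.swap_apply_left]
      have h1 : ((x * s : Gde d e 2) : W (d * e) 2).a 1 = (x : W (d * e) 2).a 1 - 1 := by
        rw [hco, W.mul_def, hp]
        simp [hs, Equiv.swap_apply_right, sub_eq_add_neg]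
      have hpp : ((x * s : Gde d e 2) : W (d * e) 2).p = 1 := by
        rw [hco, W.mul_def, hp, hs]
        exact Equiv.swap_mul_self 0 1
      have c0 : ZMod.castHom (dvd_mul_left e d) (ZMod e)
          (((x * s : Gde d e 2) : W (d * e) 2).a 0) = 0 := by
        rw [h0, map_add, hx0, map_one, neg_add_cancel]
      have c1 : ZMod.castHom (dvd_mul_left e d) (ZMod e)
          (((x * s : Gde d e 2) : W (d * e) 2).a 1) = 0 := by
        rw [h1, map_sub, hx, map_one, sub_self]
      obtain ⟨k, hk, hk2⟩ := (cast_eq_zero_iff d e _).mp c0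
      obtain ⟨l, hl, hl2⟩ := (cast_eq_zero_iff d e _).mp c1
      have hmem := key (x * s) k l hk2 hl2 hpp
      have hxe : x = (x * s) * s⁻¹ := (mul_inv_cancel_right x s).symm
      rw [hxe]
      exact mul_mem hmem (inv_mem hsmem)

/-- In `G(de,e,2)` with `d ≥ 3`, `e ≥ 2`, the subgroup
`H = ⟨s, t⟩` has order `2d²` and index `e`, and the right cosets of `H` are exactly
`H(sr)^k` for `0 ≤ k < e`: `(sr)ⁱ` and `(sr)ʲ` lie in the same right coset of `H`
with `0 ≤ i, j < e` only if `i = j`. -/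
theorem stmt9 (d e : ℕ) (hd : 3 ≤ d) (he : 2 ≤ e)
    (s t r : Gde d e 2)
    (hs : (s : W (d * e) 2) = ⟨![-1, 1], Equiv.swap 0 1⟩)
    (ht : (t : W (d * e) 2) = ⟨![(e : ZMod (d * e)), 0], 1⟩)
    (hr : (r : W (d * e) 2) = ⟨![0, 0], Equiv.swap 0 1⟩)
    (H : Subgroup (Gde d e 2)) (hH : H = Subgroup.closure {s, t}) :
    Nat.card H = 2 * d ^ 2 ∧ H.index = e ∧
    ∀ i < e, ∀ j < e, (s * r) ^ i * ((s * r) ^ j)⁻¹ ∈ H → i = j := by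
  haveI : NeZero e := ⟨by omega⟩
  haveI : NeZero (d * e) := ⟨Nat.mul_ne_zero (by omega) (by omega)⟩
  have hHK : H = Ksub d e := by rw [hH, closure_eq_Ksub d e hd he s t hs ht]
  have hcard : Nat.card H = 2 * d ^ 2 := by rw [hHK]; exact card_Ksub d e hd he
  refine ⟨hcard, ?_, ?_⟩
  · have h1 := H.index_mul_card
    rw [hcard, card_Gde d e hd he] at h1
    have h2 : 0 < 2 * d ^ 2 := by positivity
    exact Nat.eq_of_mul_eq_mul_right h2 (h1.trans (by ring))
  · intro i hi j hj hmem
    have hsr : ((s * r : Gde d e 2) : W (d * e) 2) = ⟨![-1, 1], 1⟩ := by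
      have hco : ((s * r : Gde d e 2) : W (d * e) 2)
          = (s : W (d * e) 2) * (r : W (d * e) 2) := rfl
      rw [hco, hs, hr, W.mul_def]
      refine W.ext' (funext fun i => ?_) ?_
      · fin_cases i <;> simp
      · show Equiv.swap 0 1 * Equiv.swap 0 1 = 1
        exact Equiv.swap_mul_self 0 1
    have hval : (((s * r) ^ i * ((s * r) ^ j)⁻¹ : Gde d e 2) : W (d * e) 2)
        = ⟨![(j : ZMod (d * e)) - i, (i : ZMod (d * e)) - j], 1⟩ := by
      have hco : (((s * r) ^ i * ((s * r) ^ j)⁻¹ : Gde d e 2) : W (d * e) 2)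
          = ((s * r : Gde d e 2) : W (d * e) 2) ^ i
            * (((s * r : Gde d e 2) : W (d * e) 2) ^ j)⁻¹ := by
        simp
      rw [hco, hsr, W.diag_pow, W.diag_pow, W.inv_def, W.mul_def]
      refine W.ext' (funext fun i => ?_) (by simp)
      fin_cases i <;>
        · simp [Equiv.Perm.one_symm]
          try push_cast
          ring
    rw [hHK, mem_Ksub, hval] at hmem
    have hmem' : ZMod.castHom (dvd_mul_left e d) (ZMod e)
        ((i : ZMod (d * e)) - (j : ZMod (d * e))) = 0 := by
      simpa using hmem
    rw [map_sub, map_natCast, map_natCast, sub_eq_zero] at hmem'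
    have hv := congrArg ZMod.val hmem'
    rw [ZMod.val_cast_of_lt hi, ZMod.val_cast_of_lt hj] at hv
    exact hv
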